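/- Let G and H be undirected graphs, α, β : G → H homomorphisms, and let S = σ₀, …, σ_ℓ be an H-recoloring sequence from α = σ₀ to β = σ_ℓ satisfying the monochromatic neighborhood property. Then for any vertices u, v ∈ V(G) and any walk W from u to v in G, S(v) = α(W)⁻¹ · S(u) · β(W) in π(H). -/

import Mathlib

namespace HRecoloring

/-- A digraph: a vertex type together with an arc relation. -/
structure Dgraph (V : Type) where
  Adj : V → V → Prop

variable {V X : Type}

/-- Adjacency in the underlying undirected graph. -/
def Dgraph.UAdj (G : Dgraph V) (u v : V) : Prop := G.Adj u v ∨ G.Adj v u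

/-- A digraph is loopless if it has no arc `v → v`. -/
def Dgraph.Loopless (G : Dgraph V) : Prop := ∀ v, ¬ G.Adj v v

/-- A digraph is reflexive if `v → v` for every vertex `v`. -/
def Dgraph.IsReflexive (G : Dgraph V) : Prop := ∀ v, G.Adj v v

/-- A symmetric digraph, which we identify with an undirected graph. -/
def Dgraph.IsSymmetric (G : Dgraph V) : Prop := ∀ u v, G.Adj u v → G.Adj v u

/-- The underlying undirected graph, as a symmetric digraph. -/
def Dgraph.usym (G : Dgraph V) : Dgraph V := ⟨fun u v => G.UAdj u v⟩

/-- A (di)graph homomorphism. -/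
def IsHom (G : Dgraph V) (H : Dgraph X) (f : V → X) : Prop :=
  ∀ ⦃u v⦄, G.Adj u v → H.Adj (f u) (f v)

/-- A walk from `a` to `b`, encoded by its list of successive vertices.
A walk in a digraph is a walk in its underlying undirected graph. -/
def IsWalk (G : Dgraph V) (a b : V) (l : List V) : Prop :=
  l ≠ [] ∧ l.head? = some a ∧ l.getLast? = some b ∧ l.Chain' G.UAdj

/-- Weak connectivity. -/
def Dgraph.WConn (G : Dgraph V) : Prop := ∀ u v : V, ∃ l, IsWalk G u v l

/-- Concatenation of two walks sharing an endpoint. -/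
def wcomp (l₁ l₂ : List V) : List V := l₁ ++ l₂.tail

/-- Number of edges of a walk. -/
def wlen (l : List V) : ℕ := l.length - 1

/-- One reduction step on walks: delete a backtracking pair `(x y)(y x)` or a
one-edge loop step `(x x)`. -/
def RStep (l l' : List V) : Prop :=
  (∃ (p s : List V) (x y : V), l = p ++ [x, y, x] ++ s ∧ l' = p ++ [x] ++ s) ∨
  (∃ (p s : List V) (x : V), l = p ++ [x, x] ++ s ∧ l' = p ++ [x] ++ s)

/-- Equality of walks in the fundamental groupoid `π(H)`: the equivalence
generated by reduction steps (two walks are equal in `π(H)` iff they reduce to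
the same reduced walk). -/
def PiEq (l l' : List V) : Prop := Relation.EqvGen RStep l l'

/-- A walk is reduced if no reduction step applies to it. -/
def IsReduced (l : List V) : Prop := ∀ l', ¬ RStep l l'

/-- A closed walk is cyclically reduced if it is reduced and its first and last
edges are not inverses of each other. -/
def IsCycReduced (l : List V) : Prop :=
  IsReduced l ∧ ∃ h : 2 ≤ l.length,
    l.get ⟨1, by omega⟩ ≠ l.get ⟨l.length - 2, by omega⟩

/-- `n`-fold concatenation of a closed walk `R` based at `h`. -/
def witer (R : List V) (h : V) : ℕ → List V
  | 0 => [h]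
  | n + 1 => wcomp R (witer R h n)

/-- `Rⁿ` for an integer `n`, for a closed walk `R` based at `h`; for `n < 0`
this is the `|n|`-fold concatenation of the reversed walk `R⁻¹`. -/
def zpowWalk (R : List V) (h : V) (n : ℤ) : List V :=
  if 0 ≤ n then witer R h n.toNat else witer R.reverse h (-n).toNat

/-- A walk is symmetric if every edge it traverses is a symmetric arc. -/
def IsSymWalk (H : Dgraph X) (l : List X) : Prop :=
  l.Chain' fun a b => H.Adj a b ∧ H.Adj b a

/-- The conjugated walk `α(W)⁻¹ · Q · β(W)`. -/
def conj (α β : V → X) (Wl : List V) (Q : List X) : List X :=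
  wcomp (wcomp (Wl.map α).reverse Q) (Wl.map β)

/-- Topological validity of a walk `Q` from `α q` to `β q`:
`β(C) = Q⁻¹ · α(C) · Q` in `π(H)` for every closed walk `C` at `q`. -/
def TopValid (G : Dgraph V) (H : Dgraph X) (α β : V → X) (q : V) (Q : List X) : Prop :=
  ∀ C : List V, IsWalk G q q C →
    PiEq (C.map β) (wcomp (wcomp Q.reverse (C.map α)) Q)

/-- IN-zigzag pattern `a₁ ← a₂ → a₃ ← … ← a_{n-1} → a_n`. -/
def INCompatible (H : Dgraph X) (l : List X) : Prop :=
  ∀ (i : ℕ) (h : i + 1 < l.length),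
    if i % 2 = 0 then H.Adj (l.get ⟨i + 1, h⟩) (l.get ⟨i, by omega⟩)
    else H.Adj (l.get ⟨i, by omega⟩) (l.get ⟨i + 1, h⟩)

/-- OUT-zigzag pattern `a₁ → a₂ ← a₃ → … → a_{n-1} ← a_n`. -/
def OUTCompatible (H : Dgraph X) (l : List X) : Prop :=
  ∀ (i : ℕ) (h : i + 1 < l.length),
    if i % 2 = 0 then H.Adj (l.get ⟨i, by omega⟩) (l.get ⟨i + 1, h⟩)
    else H.Adj (l.get ⟨i + 1, h⟩) (l.get ⟨i, by omega⟩)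

/-- A vertex is of type IN if it has an in-neighbor. -/
def TypeIN (G : Dgraph V) (v : V) : Prop := ∃ u, G.Adj u v

/-- A vertex is of type OUT if it has an out-neighbor. -/
def TypeOUT (G : Dgraph V) (v : V) : Prop := ∃ u, G.Adj v u

/-- A vertex is of type SYM if it is of type IN and of type OUT. -/
def TypeSYM (G : Dgraph V) (v : V) : Prop := TypeIN G v ∧ TypeOUT G v

/-- The zigzag condition for the vertex `v`. -/
def Zigzag (G : Dgraph V) (H : Dgraph X) (v : V) (l : List X) : Prop :=
  (TypeIN G v → INCompatible H l) ∧ (TypeOUT G v → OUTCompatible H l)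

/-- A recoloring sequence: a nonempty sequence of homomorphisms in which
consecutive homomorphisms differ on exactly one vertex. -/
def IsRecolSeq (G : Dgraph V) (H : Dgraph X) (σs : List (V → X)) : Prop :=
  σs ≠ [] ∧ (∀ σ ∈ σs, IsHom G H σ) ∧ σs.Chain' fun σ σ' => ∃! u, σ u ≠ σ' u

/-- The monochromatic neighborhood property: whenever a vertex changes its
color, all of its neighbors (in the underlying undirected graph) have one
common color. -/
def MonoNbhd (G : Dgraph V) (σs : List (V → X)) : Prop :=
  σs.Chain' fun σ σ' => ∀ v, σ v ≠ σ' v → ∃ h, ∀ w, G.UAdj v w → σ w = h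

/-- `VWalk G v σs S`: `S` is the vertex walk `S(v)` of the recoloring sequence
`σs`; each color change of `v` from `a` to `b`, while all neighbors of `v` are
colored `h`, contributes the two edges `(a h)(h b)`. -/
inductive VWalk (G : Dgraph V) (v : V) : List (V → X) → List X → Prop
  | single (σ : V → X) : VWalk G v [σ] [σ v]
  | stay {σ σ' : V → X} {rest : List (V → X)} {l : List X} :
      σ v = σ' v → VWalk G v (σ' :: rest) l → VWalk G v (σ :: σ' :: rest) l
  | move {σ σ' : V → X} {rest : List (V → X)} {l : List X} (h : X) :
      σ v ≠ σ' v → (∀ w, G.UAdj v w → σ w = h) →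
      VWalk G v (σ' :: rest) l → VWalk G v (σ :: σ' :: rest) (σ v :: h :: l)

/-- `H`-realizability of a walk `Q` via recoloring sequences satisfying the
monochromatic neighborhood property: `Q = S(q)` in `π(H)`. -/
def MRealizable (G : Dgraph V) (H : Dgraph X) (α β : V → X) (q : V) (Q : List X) : Prop :=
  ∃ (σs : List (V → X)) (Sq : List X),
    IsRecolSeq G H σs ∧ σs.head? = some α ∧ σs.getLast? = some β ∧
    MonoNbhd G σs ∧ VWalk G q σs Sq ∧ PiEq Sq Q

/-- Orientation compatibility of a walk `Q`: every generated vertex walk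
satisfies the zigzag condition. -/
def OrientCompatible (G : Dgraph V) (H : Dgraph X) (α β : V → X) (q : V) (Q : List X) : Prop :=
  ∀ (v : V) (Wl : List V), IsWalk G q v Wl →
    ∀ S : List X, IsReduced S → PiEq (conj α β Wl Q) S → Zigzag G H v S

/-- Hom₁-adjacency: the homomorphisms differ on exactly one vertex and, for
every arc `x → y` of `G`, both `φ x → ψ y` and `ψ x → φ y` are arcs of `H`. -/
def Hom1Adj (G : Dgraph V) (H : Dgraph X) (φ ψ : V → X) : Prop :=
  (∃! u, φ u ≠ ψ u) ∧ ∀ ⦃x y⦄, G.Adj x y → H.Adj (φ x) (ψ y) ∧ H.Adj (ψ x) (φ y)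

/-- A recoloring sequence in the Hom₁ sense (digraphs). -/
def Hom1Seq (G : Dgraph V) (H : Dgraph X) (σs : List (V → X)) : Prop :=
  σs ≠ [] ∧ (∀ σ ∈ σs, IsHom G H σ) ∧ σs.Chain' (Hom1Adj G H)

/-- A recoloring sequence in which each step recolors exactly one vertex to an
adjacent color (the Hom₁ sense for reflexive undirected graphs). -/
def AdjRecolSeq (G : Dgraph V) (H : Dgraph X) (σs : List (V → X)) : Prop :=
  σs ≠ [] ∧ (∀ σ ∈ σs, IsHom G H σ) ∧
  σs.Chain' fun σ σ' => (∃! u, σ u ≠ σ' u) ∧ ∀ u, σ u ≠ σ' u → H.Adj (σ u) (σ' u)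

/-- The push-or-pull property: whenever a vertex changes its color from `a` to
`b`, every neighbor of that vertex has color `a` or `b`. -/
def PushOrPull (G : Dgraph V) (σs : List (V → X)) : Prop :=
  σs.Chain' fun σ σ' => ∀ u, σ u ≠ σ' u → ∀ w, G.UAdj u w → σ w = σ u ∨ σ w = σ' u

/-- The walk of successive colors of `v` along a recoloring sequence. -/
def colorWalk (σs : List (V → X)) (v : V) : List X := σs.map fun σ => σ v

/-- `H`-realizability via recoloring sequences (reflexive undirected Hom₁
sense) satisfying the push-or-pull property. -/
def PRealizable (G : Dgraph V) (H : Dgraph X) (α β : V → X) (q : V) (Q : List X) : Prop :=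
  ∃ σs : List (V → X), AdjRecolSeq G H σs ∧ σs.head? = some α ∧ σs.getLast? = some β ∧
    PushOrPull G σs ∧ PiEq (colorWalk σs q) Q

/-- `H`-realizability via Hom₁ recoloring sequences of digraphs satisfying the
push-or-pull property. -/
def DRealizable (G : Dgraph V) (H : Dgraph X) (α β : V → X) (q : V) (Q : List X) : Prop :=
  ∃ σs : List (V → X), Hom1Seq G H σs ∧ σs.head? = some α ∧ σs.getLast? = some β ∧
    PushOrPull G σs ∧ PiEq (colorWalk σs q) Q

/-- `H` contains no 4-cycle of algebraic girth 0 as a subgraph (neither of the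
two orientations of the 4-cycle with two forward and two backward arcs). -/
def NoZeroGirthC4 (H : Dgraph X) : Prop :=
  ∀ a b c d : X, a ≠ b → a ≠ c → a ≠ d → b ≠ c → b ≠ d → c ≠ d →
    ¬(H.Adj a b ∧ H.Adj b d ∧ H.Adj a c ∧ H.Adj c d) ∧
    ¬(H.Adj a b ∧ H.Adj d b ∧ H.Adj a c ∧ H.Adj d c)

/-- `H` contains no triangle of algebraic girth 1 as a subgraph. -/
def NoOneGirthTriangle (H : Dgraph X) : Prop :=
  ∀ x y z : X, x ≠ y → y ≠ z → x ≠ z → ¬(H.Adj x y ∧ H.Adj y z ∧ H.Adj x z)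

/-- A path in the reconfiguration graph `R_H(G)` from `α` to `β`. -/
def IsRPath (G : Dgraph V) (H : Dgraph X) (α β : V → X) (L : List (V → X)) : Prop :=
  L ≠ [] ∧ L.head? = some α ∧ L.getLast? = some β ∧
  (∀ σ ∈ L, IsHom G H σ) ∧ L.Chain' fun φ ψ => ∃! u, φ u ≠ ψ u

/-- A path in the graph `Hom₁(G, H)` from `α` to `β`. -/
def IsHom1Path (G : Dgraph V) (H : Dgraph X) (α β : V → X) (L : List (V → X)) : Prop :=
  L ≠ [] ∧ L.head? = some α ∧ L.getLast? = some β ∧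
  (∀ σ ∈ L, IsHom G H σ) ∧ L.Chain' (Hom1Adj G H)

/-- The set of reduced walks `Q` from `α q` to `β q` that generate symmetric
vertex walks on `V'` with the system of walks `Wf`. -/
def SymGenSet (H : Dgraph X) (α β : V → X) (q : V)
    (V' : Set V) (Wf : V → List V) : Set (List X) :=
  {Q | IsWalk H (α q) (β q) Q ∧ IsReduced Q ∧
    ∀ v ∈ V', ∀ S : List X, IsReduced S → PiEq (conj α β (Wf v) Q) S → IsSymWalk H S}

/-- The set of orientation-compatible walks for `q` and the system `Uf`. -/
def OCSet (G : Dgraph V) (H : Dgraph X) (α β : V → X) (q : V)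
    (Uf : V → List V) : Set (List X) :=
  {Q | IsWalk H (α q) (β q) Q ∧ IsReduced Q ∧ Even (wlen Q) ∧
    ∀ (v : V) (S : List X), IsReduced S → PiEq (conj α β (Uf v) Q) S → Zigzag G H v S}

/-- The set `Π_q` of walks from `α q` to `β q` that are `H`-realizable via
recoloring sequences satisfying the monochromatic neighborhood property. -/
def MRealSet (G : Dgraph V) (H : Dgraph X) (α β : V → X) (q : V) : Set (List X) :=
  {Q | IsWalk H (α q) (β q) Q ∧ IsReduced Q ∧ MRealizable G H α β q Q}

/-- The set of walks from `α q` to `β q` that are `H`-realizable via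
recoloring sequences satisfying the push-or-pull property. -/
def PRealSet (G : Dgraph V) (H : Dgraph X) (α β : V → X) (q : V) : Set (List X) :=
  {Q | IsWalk H (α q) (β q) Q ∧ IsReduced Q ∧ PRealizable G H α β q Q}

/-- Ceiling division on natural numbers. -/
def cdiv (a b : ℕ) : ℕ := (a + b - 1) / b

end HRecoloring

open HRecoloring

section Aux

variable {V X : Type}

lemma uadj_symm (G : Dgraph V) {u v : V} (h : G.UAdj u v) : G.UAdj v u := h.symm

lemma rstep_bt (p s : List V) (x y : V) : RStep (p ++ x :: y :: x :: s) (p ++ x :: s) :=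
  Or.inl ⟨p, s, x, y, by simp, by simp⟩

lemma rstep_loop (p s : List V) (x : V) : RStep (p ++ x :: x :: s) (p ++ x :: s) :=
  Or.inr ⟨p, s, x, by simp, by simp⟩

lemma piEq_refl (l : List V) : PiEq l l := Relation.EqvGen.refl l

lemma piEq_symm {l l' : List V} (h : PiEq l l') : PiEq l' l := Relation.EqvGen.symm _ _ h

lemma piEq_trans {l₁ l₂ l₃ : List V} (h : PiEq l₁ l₂) (h' : PiEq l₂ l₃) : PiEq l₁ l₃ :=
  Relation.EqvGen.trans _ _ _ h h'

lemma piEq_of_rstep {l l' : List V} (h : RStep l l') : PiEq l l' := Relation.EqvGen.rel _ _ h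

lemma rstep_append_left {l l' : List V} (p : List V) (h : RStep l l') :
    RStep (p ++ l) (p ++ l') := by
  rcases h with ⟨q, s, x, y, h1, h2⟩ | ⟨q, s, x, h1, h2⟩
  · exact Or.inl ⟨p ++ q, s, x, y, by simp [h1], by simp [h2]⟩
  · exact Or.inr ⟨p ++ q, s, x, by simp [h1], by simp [h2]⟩

lemma rstep_append_right {l l' : List V} (t : List V) (h : RStep l l') :
    RStep (l ++ t) (l' ++ t) := by
  rcases h with ⟨q, s, x, y, h1, h2⟩ | ⟨q, s, x, h1, h2⟩
  · exact Or.inl ⟨q, s ++ t, x, y, by simp [h1], by simp [h2]⟩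
  · exact Or.inr ⟨q, s ++ t, x, by simp [h1], by simp [h2]⟩

lemma piEq_append_left {l l' : List V} (p : List V) (h : PiEq l l') :
    PiEq (p ++ l) (p ++ l') := by
  induction h with
  | rel a b hab => exact piEq_of_rstep (rstep_append_left p hab)
  | refl a => exact piEq_refl _
  | symm a b _ ih => exact piEq_symm ih
  | trans a b c _ _ ih₁ ih₂ => exact piEq_trans ih₁ ih₂

lemma piEq_append_right {l l' : List V} (t : List V) (h : PiEq l l') :
    PiEq (l ++ t) (l' ++ t) := by
  induction h with
  | rel a b hab => exact piEq_of_rstep (rstep_append_right t hab)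
  | refl a => exact piEq_refl _
  | symm a b _ ih => exact piEq_symm ih
  | trans a b c _ _ ih₁ ih₂ => exact piEq_trans ih₁ ih₂

lemma vwalk_ne_nil {G : Dgraph V} {x : V} {σs : List (V → X)} {S : List X}
    (h : VWalk G x σs S) : S ≠ [] := by
  induction h with
  | single => simp
  | stay _ _ ih => exact ih
  | move => simp

lemma vwalk_head {G : Dgraph V} {x : V} {σs : List (V → X)} {S : List X}
    (h : VWalk G x σs S) : ∀ {σ : V → X}, σs.head? = some σ →
    S.head? = some (σ x) := by
  induction h with
  | single σ₀ => intro σ hh; simp at hh; subst hh; rfl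
  | @stay σ₀ σ₁ rest l heq _ ih =>
      intro σ hh
      simp only [List.head?_cons, Option.some.injEq] at hh
      rw [ih (σ := σ₁) (by simp), ← hh, heq]
  | move h hne hmono _ _ =>
      intro σ hh
      simp only [List.head?_cons, Option.some.injEq] at hh
      simp [← hh]

lemma vwalk_exists {G : Dgraph V} {σs : List (V → X)}
    (hmono : MonoNbhd G σs) (hne : σs ≠ []) (x : V) : ∃ S, VWalk G x σs S := by
  induction σs with
  | nil => exact absurd rfl hne
  | cons σ rest ih =>
      cases rest with
      | nil => exact ⟨[σ x], VWalk.single σ⟩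
      | cons σ' rest' =>
          rw [MonoNbhd, List.Chain', List.isChain_cons_cons] at hmono
          obtain ⟨S', hS'⟩ := ih hmono.2 (by simp)
          by_cases hc : σ x = σ' x
          · exact ⟨S', VWalk.stay hc hS'⟩
          · obtain ⟨h, hh⟩ := hmono.1 x hc
            exact ⟨σ x :: h :: S', VWalk.move h hc hh hS'⟩

lemma vwalk_unique {G : Dgraph V} {x w : V} (hw : G.UAdj x w) :
    ∀ {σs : List (V → X)} {S S' : List X},
    VWalk G x σs S → VWalk G x σs S' → S = S' := by
  intro σs S S' hS
  induction hS generalizing S' with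
  | single σ =>
      intro hS'; cases hS'; rfl
  | stay heq _ ih =>
      intro hS'
      cases hS' with
      | stay _ h' => exact ih h'
      | move _ hne _ _ => exact absurd heq hne
  | move h hne hmono _ ih =>
      intro hS'
      cases hS' with
      | stay heq _ => exact absurd heq hne
      | move h' hne' hmono' hrest =>
          have : h = h' := by rw [← hmono w hw, ← hmono' w hw]
          rw [this, ih hrest]

/-- The key per-edge lemma. -/
lemma edge_lemma {G : Dgraph V} {u v : V} (huv : G.UAdj u v) :
    ∀ {σs : List (V → X)} {Su : List X}, VWalk G u σs Su →
    ∀ {Sv : List X} {σ τ : V → X},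
    σs.Chain' (fun σ σ' => ∃! w, σ w ≠ σ' w) →
    VWalk G v σs Sv → σs.head? = some σ → σs.getLast? = some τ →
    PiEq Sv (σ v :: Su ++ [τ v]) := by
  intro σs Su hSu
  induction hSu with
  | single σ₀ =>
      intro Sv σ τ hchain hSv hh hl
      simp only [List.head?_cons, Option.some.injEq] at hh
      simp only [List.getLast?_singleton, Option.some.injEq] at hl
      subst hh; subst hl
      cases hSv
      exact piEq_symm (piEq_of_rstep (rstep_bt [] [] (σ₀ v) (σ₀ u)))
  | @stay σ₀ σ₁ rest Su' hequ hSu' ih =>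
      intro Sv σ τ hchain hchainSv hh hl
      rw [List.Chain', List.isChain_cons_cons] at hchain
      simp only [List.head?_cons, Option.some.injEq] at hh
      rw [List.getLast?_cons_cons] at hl
      subst hh
      cases hchainSv with
      | stay heqv hSv' =>
          have := ih (σ := σ₁) hchain.2 hSv' rfl hl
          rwa [← heqv] at this
      | move h hnev hmono hSv' =>
          have hmain := ih (σ := σ₁) hchain.2 hSv' rfl hl
          -- Sv = σ₀ v :: h :: Sv', with σ₀ u = h (u is a neighbor of v)
          have hu : σ₀ u = h := hmono u (uadj_symm G huv)
          have hσ₁u : σ₁ u = h := by rw [← hequ]; exact hu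
          -- Su head is σ₁ u = σ₀ u = h
          have hhead : Su'.head? = some (σ₁ u) := vwalk_head hSu' (by simp)
          obtain ⟨t, ht⟩ : ∃ t, Su' = σ₁ u :: t := by
            cases Su' with
            | nil => simp at hhead
            | cons a t => simp only [List.head?_cons, Option.some.injEq] at hhead; exact ⟨t, by rw [hhead]⟩
          have step1 : PiEq (σ₀ v :: h :: _) (σ₀ v :: h :: (σ₁ v :: Su' ++ [τ v])) :=
            piEq_append_left [σ₀ v, h] hmain
          refine piEq_trans step1 ?_
          have red := piEq_of_rstep (rstep_bt [σ₀ v] (t ++ [τ v]) h (σ₁ v))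
          simpa [ht, hσ₁u] using red
  | @move σ₀ σ₁ rest Su' h hneu hmono hSu' ih =>
      intro Sv σ τ hchain hchainSv hh hl
      rw [List.Chain', List.isChain_cons_cons] at hchain
      simp only [List.head?_cons, Option.some.injEq] at hh
      rw [List.getLast?_cons_cons] at hl
      subst hh
      cases hchainSv with
      | stay heqv hSv' =>
          have hmain := ih (σ := σ₁) hchain.2 hSv' rfl hl
          have hv : σ₀ v = h := hmono v huv
          refine piEq_trans hmain (piEq_symm ?_)
          -- goal: PiEq (σ₀ v :: (σ₀ u :: h :: Su') ++ [τ v]) (σ₁ v :: Su' ++ [τ v])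
          have e1 : σ₀ v :: (σ₀ u :: h :: Su') ++ [τ v]
              = [] ++ h :: σ₀ u :: h :: (Su' ++ [τ v]) := by simp [hv]
          have e2 : σ₁ v :: Su' ++ [τ v] = [] ++ h :: (Su' ++ [τ v]) := by
            simp [← heqv, hv]
          rw [e1, e2]
          exact piEq_of_rstep (rstep_bt [] (Su' ++ [τ v]) h (σ₀ u))
      | move h' hnev hmono' hSv' =>
          -- both change, so u = v by uniqueness
          obtain ⟨w₀, hw₀, huniq⟩ := hchain.1
          have huv' : u = v := (huniq u hneu).trans (huniq v hnev).symm
          subst huv'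
          have hu : σ₀ u = h := hmono u huv
          have hu' : σ₀ u = h' := hmono' u huv
          have hmain := ih (σ := σ₁) hchain.2 hSv' rfl hl
          have hhead : Su'.head? = some (σ₁ u) := vwalk_head hSu' (by simp)
          obtain ⟨t, ht⟩ : ∃ t, Su' = σ₁ u :: t := by
            cases Su' with
            | nil => simp at hhead
            | cons a t => simp only [List.head?_cons, Option.some.injEq] at hhead; exact ⟨t, by rw [hhead]⟩
          have step1 : PiEq (σ₀ u :: h' :: _) (σ₀ u :: h' :: (σ₁ u :: Su' ++ [τ u])) :=
            piEq_append_left [σ₀ u, h'] hmain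
          refine piEq_trans step1 ?_
          -- LHS: σ₀u :: σ₀u :: σ₁u :: σ₁u :: t ++ [τ u]
          -- RHS: σ₀u :: σ₀u :: σ₀u :: σ₁u :: t ++ [τ u]
          have r1 := piEq_of_rstep (rstep_loop [σ₀ u, σ₀ u] (t ++ [τ u]) (σ₁ u))
          have r2 := piEq_of_rstep (rstep_loop [] (σ₁ u :: (t ++ [τ u])) (σ₀ u))
          have r3 := piEq_of_rstep (rstep_loop [σ₀ u] (σ₁ u :: (t ++ [τ u])) (σ₀ u))
          simpa [ht, ← hu, ← hu'] using
            piEq_trans r1 (piEq_trans r2 (piEq_symm (piEq_trans r3 r2)))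

lemma exists_nbr {G : Dgraph V} [Fintype V] (hGconn : G.WConn)
    (hcard : 1 < Fintype.card V) (x : V) : ∃ w, G.UAdj x w := by
  obtain ⟨y, hy⟩ := Fintype.exists_ne_of_one_lt_card hcard x
  obtain ⟨l, hl⟩ := hGconn x y
  obtain ⟨hne, hh, hlast, hchain⟩ := hl
  cases l with
  | nil => exact absurd rfl hne
  | cons a t =>
      simp only [List.head?_cons, Option.some.injEq] at hh
      subst hh
      cases t with
      | nil =>
          simp only [List.getLast?_singleton, Option.some.injEq] at hlast
          exact absurd hlast.symm hy
      | cons b t' =>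
          rw [List.Chain', List.isChain_cons_cons] at hchain
          exact ⟨b, hchain.1⟩

lemma main_aux {G : Dgraph V} {σs : List (V → X)} {α β : V → X}
    (hchain : σs.Chain' fun σ σ' => ∃! w, σ w ≠ σ' w)
    (hmono : MonoNbhd G σs) (hne : σs ≠ [])
    (hh : σs.head? = some α) (hl : σs.getLast? = some β)
    (hnbr : ∀ x : V, ∃ w, G.UAdj x w)
    {v : V} {Sv : List X} (hSv : VWalk G v σs Sv) :
    ∀ (Wl : List V) (u : V) (Su : List X), IsWalk G u v Wl → VWalk G u σs Su →
      PiEq Sv (conj α β Wl Su) := by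
  intro Wl
  induction Wl with
  | nil => intro u Su hW _; exact absurd rfl hW.1
  | cons a rest ih =>
      intro u Su hW hSu
      obtain ⟨-, hWh, hWl, hWc⟩ := hW
      simp only [List.head?_cons, Option.some.injEq] at hWh
      subst hWh
      cases rest with
      | nil =>
          simp only [List.getLast?_singleton, Option.some.injEq] at hWl
          subst hWl
          obtain ⟨w, hw⟩ := hnbr a
          have hSveq : Sv = Su := vwalk_unique hw hSv hSu
          subst hSveq
          have hhd : Sv.head? = some (α a) := vwalk_head hSu hh
          obtain ⟨t, ht⟩ : ∃ t, Sv = α a :: t := by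
            cases Sv with
            | nil => simp at hhd
            | cons c t =>
                simp only [List.head?_cons, Option.some.injEq] at hhd
                exact ⟨t, by rw [hhd]⟩
          subst ht
          show PiEq _ (conj α β [a] (α a :: t))
          simp only [conj, wcomp, List.map_cons, List.map_nil, List.reverse_cons,
            List.reverse_nil, List.tail_cons, List.nil_append, List.append_nil]
          exact piEq_refl _
      | cons b rest' =>
          rw [List.Chain', List.isChain_cons_cons] at hWc
          rw [List.getLast?_cons_cons] at hWl
          have hWb : IsWalk G b v (b :: rest') := ⟨by simp, rfl, hWl, hWc.2⟩
          obtain ⟨Sb, hSb⟩ := vwalk_exists hmono hne b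
          have hedge : PiEq Sb (α b :: Su ++ [β b]) :=
            edge_lemma hWc.1 hSu hchain hSb hh hl
          have ihb := ih b Sb hWb hSb
          -- rewrite both conj's in terms of lists with explicit heads
          have hhdb : Sb.head? = some (α b) := vwalk_head hSb hh
          obtain ⟨tb, htb⟩ : ∃ t, Sb = α b :: t := by
            cases Sb with
            | nil => simp at hhdb
            | cons c t =>
                simp only [List.head?_cons, Option.some.injEq] at hhdb
                exact ⟨t, by rw [hhdb]⟩
          have hhdu : Su.head? = some (α a) := vwalk_head hSu hh
          obtain ⟨tu, htu⟩ : ∃ t, Su = α a :: t := by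
            cases Su with
            | nil => simp at hhdu
            | cons c t =>
                simp only [List.head?_cons, Option.some.injEq] at hhdu
                exact ⟨t, by rw [hhdu]⟩
          have eqSb : conj α β (b :: rest') Sb
              = (rest'.map α).reverse ++ (Sb ++ rest'.map β) := by
            simp [conj, wcomp, htb]
          have eqQ : (rest'.map α).reverse ++ ((α b :: Su ++ [β b]) ++ rest'.map β)
              = conj α β (a :: b :: rest') Su := by
            simp [conj, wcomp, htu]
          have step : PiEq ((rest'.map α).reverse ++ (Sb ++ rest'.map β))
              ((rest'.map α).reverse ++ ((α b :: Su ++ [β b]) ++ rest'.map β)) :=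
            piEq_append_left _ (piEq_append_right _ hedge)
          refine piEq_trans ihb ?_
          rw [eqSb, ← eqQ]
          exact step

end Aux

/-- For undirected graphs `G, H` and an `H`-recoloring sequence `σs` from `α`
to `β` satisfying the monochromatic neighborhood property, the vertex walks
satisfy `S(v) = α(W)⁻¹ · S(u) · β(W)` in `π(H)` for every walk `W` from `u` to
`v` in `G`. -/
theorem statement5 {V X : Type} [Fintype V] [Fintype X]
    (G : Dgraph V) (H : Dgraph X)
    (hGsym : G.IsSymmetric) (hHsym : H.IsSymmetric)
    (hGconn : G.WConn) (hHconn : H.WConn) (hGcard : 1 < Fintype.card V)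
    (α β : V → X) (σs : List (V → X))
    (hseq : IsRecolSeq G H σs)
    (hhead : σs.head? = some α) (hlast : σs.getLast? = some β)
    (hmono : MonoNbhd G σs)
    (u v : V) (Wl : List V) (hW : IsWalk G u v Wl)
    (Su Sv : List X) (hSu : VWalk G u σs Su) (hSv : VWalk G v σs Sv) :
    PiEq Sv (conj α β Wl Su) := by
  obtain ⟨hne, -, hchain⟩ := hseq
  exact main_aux hchain hmono hne hhead hlast (exists_nbr hGconn hGcard) hSv Wl u Su hW hSu
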